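/- The new quantum Fisher information component for the parameter φ, defined as g₃₃ = tr(ρ·(1/2)(L₃L₃ + L₃L₃)) = tr(ρ·L₃²), equals (9/(16r⁴))·(2r + (1-r²)·log((1-r)/(1+r)))²·sin²θ, for 0 < r < 1. -/
import Mathlib


open Real Matrix

noncomputable def rho (r θ φ : ℝ) : Matrix (Fin 2) (Fin 2) ℂ :=
  (1 / 2 : ℂ) •
    !![(1 + r * Real.cos θ : ℂ), r * Complex.exp (-Complex.I * φ) * Real.sin θ;
       r * Complex.exp (Complex.I * φ) * Real.sin θ, (1 - r * Real.cos θ : ℂ)]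

noncomputable def L3 (r θ φ : ℝ) : Matrix (Fin 2) (Fin 2) ℂ :=
  ((3 / (4 * r ^ 2) * (2 * r + (1 - r ^ 2) * Real.log ((1 - r) / (1 + r))) : ℝ) : ℂ) •
    !![0, -Complex.I * Complex.exp (-Complex.I * φ) * Real.sin θ;
       Complex.I * Complex.exp (Complex.I * φ) * Real.sin θ, 0]

theorem g33_formula (r θ φ : ℝ) (hr : 0 < r) (hr1 : r < 1) :
    (rho r θ φ * ((1 / 2 : ℂ) • (L3 r θ φ * L3 r θ φ + L3 r θ φ * L3 r θ φ))).trace =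
        ((9 / (16 * r ^ 4) * (2 * r + (1 - r ^ 2) * Real.log ((1 - r) / (1 + r))) ^ 2 *
          Real.sin θ ^ 2 : ℝ) : ℂ) ∧
      (rho r θ φ * (L3 r θ φ * L3 r θ φ)).trace =
        ((9 / (16 * r ^ 4) * (2 * r + (1 - r ^ 2) * Real.log ((1 - r) / (1 + r))) ^ 2 *
          Real.sin θ ^ 2 : ℝ) : ℂ) := by
  have hx : Complex.exp (-(Complex.I * φ)) * Complex.exp (Complex.I * φ) = 1 := by
    rw [← Complex.exp_add]; ring_nf; exact Complex.exp_zero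
  set c : ℝ := 3 / (4 * r ^ 2) * (2 * r + (1 - r ^ 2) * Real.log ((1 - r) / (1 + r))) with hc
  have hsq : L3 r θ φ * L3 r θ φ =
      (((c * Real.sin θ) ^ 2 : ℝ) : ℂ) • (1 : Matrix (Fin 2) (Fin 2) ℂ) := by
    ext i j
    fin_cases i <;> fin_cases j <;>
      simp only [L3, ← hc, Matrix.smul_apply, Matrix.mul_apply, Fin.sum_univ_two, Fin.isValue,
        Matrix.of_apply, Matrix.cons_val', Matrix.cons_val_zero, Matrix.cons_val_one,
        Matrix.head_cons, Matrix.head_fin_const, Matrix.empty_val', Matrix.cons_val_fin_one,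
        smul_eq_mul, neg_mul, Matrix.one_apply, Fin.mk_zero, Fin.mk_one,
        Complex.ofReal_pow, Complex.ofReal_mul, mul_zero, zero_mul, add_zero, zero_add,
        if_true, eq_self_iff_true] <;>
    first
      | (rw [if_neg (by decide)]; ring)
      | linear_combination (-(c:ℂ)^2 * (Real.sin θ : ℂ)^2 * Complex.exp (-(Complex.I * φ)) *
          Complex.exp (Complex.I * φ)) * Complex.I_sq +
          ((c:ℂ)^2 * (Real.sin θ : ℂ)^2) * hx
  have hkey : (rho r θ φ * (L3 r θ φ * L3 r θ φ)).trace =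
      ((9 / (16 * r ^ 4) * (2 * r + (1 - r ^ 2) * Real.log ((1 - r) / (1 + r))) ^ 2 *
        Real.sin θ ^ 2 : ℝ) : ℂ) := by
    rw [hsq, Matrix.mul_smul, Matrix.mul_one, Matrix.trace_smul]
    have htr : (rho r θ φ).trace = 1 := by
      simp [rho, Matrix.trace_fin_two]; ring
    rw [htr, smul_eq_mul, mul_one, hc]
    push_cast
    have hr' : (r : ℂ) ≠ 0 := by exact_mod_cast hr.ne'
    field_simp
    ring
  refine ⟨?_, hkey⟩
  rw [← hkey]
  congr 1
  rw [smul_add, ← two_smul ℂ, smul_smul]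
  norm_num
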